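/- Let m, n ≥ 1, κ₁ ≥ 1 and κ₂ ≥ 1 be integers and let K(λ) be a (κ₁+1)m × κ₂n matrix pencil over ℝ satisfying (Λ_{κ₁}(λ)^T ⊗ I_m)·K(λ) = 0_{m × κ₂n}. Then there exists a constant matrix C ∈ ℝ^{κ₁m × κ₂n} such that K(λ) = (L_{κ₁}(λ)^T ⊗ I_m)·C. -/

import Mathlib

open Matrix Polynomial
open scoped Kronecker
open Finset

noncomputable section

/-- `Λ_j(λ)` as a `(j+1) × 1` matrix of real polynomials, with `i`-th entry `λ^{j-i}`. -/
def Lam (j : ℕ) : Matrix (Fin (j + 1)) (Fin 1) (Polynomial ℝ) :=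
  Matrix.of fun i _ => X ^ (j - (i : ℕ))

/-- `L_κ(λ)`, the `κ × (κ+1)` pencil with `-1` on the diagonal and `λ` on the superdiagonal. -/
def Lk (κ : ℕ) : Matrix (Fin κ) (Fin (κ + 1)) (Polynomial ℝ) :=
  Matrix.of fun i j => if (j : ℕ) = (i : ℕ) then -1 else if (j : ℕ) = (i : ℕ) + 1 then X else 0

/-- The matrix pencil `λ·A + B` as a matrix of real polynomials. -/
def pencilM {ρ γ : Type*} (A B : Matrix ρ γ ℝ) : Matrix ρ γ (Polynomial ℝ) :=
  Matrix.of fun i j => X * C (A i j) + C (B i j)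

/-- The matrix polynomial `Σ_{i=0}^k Pc i · λ^i` as a matrix of real polynomials. -/
def polyOf (m n k : ℕ) (Pc : ℕ → Matrix (Fin m) (Fin n) ℝ) :
    Matrix (Fin m) (Fin n) (Polynomial ℝ) :=
  Matrix.of fun i j => ∑ t ∈ Finset.range (k + 1), X ^ t * C (Pc t i j)

lemma coeff_of_eq (κ : ℕ) (kx ky : ℕ → ℝ)
    (h : ∑ i ∈ range (κ+1), X^(κ-i) * (X * C (kx i) + C (ky i)) = (0 : Polynomial ℝ)) :
    ∀ k, ((∑ x ∈ range (κ + 1), if k = x + 1 then kx (κ - x) else 0)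
          + (if k < κ + 1 then ky (κ - k) else 0)) = 0 := by
  have h2 : ∑ i ∈ range (κ+1), (C (kx (κ-i)) * X^(i+1) + C (ky (κ-i)) * X^i) = (0 : Polynomial ℝ) := by
    rw [← h, ← Finset.sum_range_reflect]
    refine Finset.sum_congr rfl fun i hi => ?_
    simp only [Finset.mem_range] at hi
    have e1 : κ + 1 - 1 - i = κ - i := by omega
    have e2 : κ - (κ - i) = i := by omega
    rw [e1, e2]; ring
  intro k
  have h3 := congrArg (fun p => Polynomial.coeff p k) h2
  simpa [Polynomial.finset_sum_coeff, coeff_X_pow, mul_ite, Finset.sum_add_distrib] using h3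

lemma key (κ : ℕ) (kx ky : ℕ → ℝ)
    (h : ∑ i ∈ range (κ+1), X^(κ-i) * (X * C (kx i) + C (ky i)) = (0 : Polynomial ℝ)) :
    kx 0 = 0 ∧ ky κ = 0 ∧ ∀ j < κ, kx (j+1) + ky j = 0 := by
  have H := coeff_of_eq κ kx ky h
  refine ⟨?_, ?_, ?_⟩
  · have h1 := H (κ+1)
    simpa [add_left_inj, Finset.sum_ite_eq] using h1
  · simpa using H 0
  · intro j hj
    have h1 := H (κ - j - 1 + 1)
    simp only [add_left_inj, Finset.sum_ite_eq, Finset.mem_range] at h1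
    have e1 : κ - (κ - j - 1) = j + 1 := by omega
    have e2 : κ - (κ - j - 1 + 1) = j := by omega
    rw [e1, e2, if_pos (by omega), if_pos (by omega)] at h1
    exact h1

lemma split_ite (p q : Prop) [Decidable p] [Decidable q] (hpq : ¬ (p ∧ q))
    (x y : Polynomial ℝ) :
    (if p then x else if q then y else 0)
      = (if p then x else 0) + (if q then y else 0) := by
  by_cases hp : p <;> by_cases hq : q <;> simp [hp, hq]
  exact absurd ⟨hp, hq⟩ hpq

theorem stmt1 (m n κ₁ κ₂ : ℕ) (hm : 1 ≤ m) (hn : 1 ≤ n) (hκ₁ : 1 ≤ κ₁) (hκ₂ : 1 ≤ κ₂)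
    (Kx Ky : Matrix (Fin (κ₁ + 1) × Fin m) (Fin κ₂ × Fin n) ℝ)
    (hK : ((Lam κ₁)ᵀ ⊗ₖ (1 : Matrix (Fin m) (Fin m) (Polynomial ℝ))) * pencilM Kx Ky = 0) :
    ∃ M : Matrix (Fin κ₁ × Fin m) (Fin κ₂ × Fin n) ℝ,
      pencilM Kx Ky = ((Lk κ₁)ᵀ ⊗ₖ (1 : Matrix (Fin m) (Fin m) (Polynomial ℝ))) * M.map C := by
  have hfacts : ∀ (a : Fin m) (q : Fin κ₂ × Fin n),
      (Kx (⟨0, by omega⟩, a) q = 0) ∧ (Ky (⟨κ₁, by omega⟩, a) q = 0) ∧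
      ∀ j, (hj : j < κ₁) → Kx (⟨j+1, by omega⟩, a) q + Ky (⟨j, by omega⟩, a) q = 0 := by
    intro a q
    set kx : ℕ → ℝ := fun i => if h : i < κ₁ + 1 then Kx (⟨i, h⟩, a) q else 0 with hkx
    set ky : ℕ → ℝ := fun i => if h : i < κ₁ + 1 then Ky (⟨i, h⟩, a) q else 0 with hky
    have h0 := congrFun (congrFun hK ((0 : Fin 1), a)) q
    simp only [Matrix.mul_apply, Matrix.kroneckerMap_apply, Lam, pencilM, Matrix.transpose_apply,
      Matrix.of_apply, Matrix.one_apply, Matrix.zero_apply, Fintype.sum_prod_type,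
      ite_mul, one_mul, zero_mul, mul_ite, mul_one, mul_zero, Finset.sum_ite_eq,
      Finset.mem_univ, if_true] at h0
    have h1 : ∑ i ∈ range (κ₁+1), X^(κ₁-i) * (X * C (kx i) + C (ky i)) = (0 : Polynomial ℝ) := by
      rw [← Fin.sum_univ_eq_sum_range (fun i => X^(κ₁-i) * (X * C (kx i) + C (ky i))) (κ₁+1)]
      rw [← h0]
      refine Finset.sum_congr rfl fun i _ => ?_
      rw [hkx, hky]
      simp only [dif_pos i.isLt]
    obtain ⟨e0, e1, e2⟩ := key κ₁ kx ky h1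
    rw [hkx] at e0; rw [hky] at e1
    simp only [dif_pos (by omega : (0:ℕ) < κ₁ + 1), dif_pos (by omega : κ₁ < κ₁ + 1)] at e0 e1
    refine ⟨e0, e1, fun j hj => ?_⟩
    have h := e2 j hj
    rwa [show kx (j+1) = Kx (⟨j+1, by omega⟩, a) q from dif_pos (by omega),
      show ky j = Ky (⟨j, by omega⟩, a) q from dif_pos (by omega)] at h
  refine ⟨fun p q => -(Ky (p.1.castSucc, p.2) q), ?_⟩
  funext p q
  obtain ⟨j, a⟩ := p
  simp only [Matrix.mul_apply, Matrix.kroneckerMap_apply, Lk, pencilM, Matrix.transpose_apply,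
    Matrix.of_apply, Matrix.one_apply, Matrix.map_apply, Fintype.sum_prod_type,
    ite_mul, one_mul, zero_mul, mul_ite, mul_one, mul_zero, Finset.sum_ite_eq,
    Finset.mem_univ, if_true]
  set ky : ℕ → ℝ := fun i => if h : i < κ₁ + 1 then Ky (⟨i, h⟩, a) q else 0 with hky
  have hR : (∑ i : Fin κ₁,
        if (j : ℕ) = (i : ℕ) then -1 * C (-(Ky (i.castSucc, a) q))
          else if (j : ℕ) = (i : ℕ) + 1 then X * C (-(Ky (i.castSucc, a) q)) else 0)
      = ∑ i ∈ range κ₁,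
        (if (j : ℕ) = i then -1 * C (-(ky i)) else if (j : ℕ) = i + 1 then X * C (-(ky i)) else 0) := by
    rw [← Fin.sum_univ_eq_sum_range
      (fun i => if (j : ℕ) = i then -1 * C (-(ky i))
        else if (j : ℕ) = i + 1 then X * C (-(ky i)) else 0) κ₁]
    refine Finset.sum_congr rfl fun i _ => ?_
    rw [show ky (i : ℕ) = Ky (⟨(i : ℕ), by omega⟩, a) q from dif_pos (by omega)]
    rfl
  change _ = (∑ i : Fin κ₁, if (j : ℕ) = (i : ℕ) then -1 * C (-(Ky (i.castSucc, a) q))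
      else if (j : ℕ) = (i : ℕ) + 1 then X * C (-(Ky (i.castSucc, a) q)) else 0)
  rw [hR]
  have hsplit : (∑ i ∈ range κ₁,
      if (j : ℕ) = i then -1 * C (-(ky i)) else if (j : ℕ) = i + 1 then X * C (-(ky i)) else 0)
      = (∑ i ∈ range κ₁, if (j : ℕ) = i then -1 * C (-(ky i)) else 0)
        + ∑ i ∈ range κ₁, if (j : ℕ) = i + 1 then X * C (-(ky i)) else 0 := by
    rw [← Finset.sum_add_distrib]
    exact Finset.sum_congr rfl fun i _ => split_ite _ _ (by omega) _ _
  rw [hsplit, Finset.sum_ite_eq]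
  simp only [Finset.mem_range]
  obtain ⟨e0, e1, e2⟩ := hfacts a q
  obtain ⟨t, ht⟩ := j
  match t with
  | 0 =>
    simp only [Fin.val_mk]
    have hz : (∑ i ∈ range κ₁, if (0:ℕ) = i + 1 then X * C (-(ky i)) else 0) = 0 :=
      Finset.sum_eq_zero fun i _ => if_neg (by omega)
    rw [hz, if_pos (by omega : (0:ℕ) < κ₁)]
    rw [show ky 0 = Ky (⟨0, by omega⟩, a) q from dif_pos (by omega)]
    have : Kx (⟨0, ht⟩, a) q = 0 := e0
    rw [this]
    simp [map_neg]
  | (s+1) =>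
    simp only [Fin.val_mk]
    have hs : s < κ₁ := by omega
    have hSum2 : (∑ i ∈ range κ₁, if s + 1 = i + 1 then X * C (-(ky i)) else 0)
        = X * C (-(ky s)) := by
      simp only [add_left_inj]
      rw [Finset.sum_ite_eq, if_pos (Finset.mem_range.mpr hs)]
    rw [hSum2]
    have hky1 : (if s + 1 < κ₁ then -1 * C (-(ky (s+1))) else 0) = C (ky (s+1)) := by
      by_cases hc : s + 1 < κ₁
      · rw [if_pos hc]; rw [map_neg]; ring
      · have hse : s + 1 = κ₁ := by omega
        rw [if_neg hc, show ky (s+1) = Ky (⟨s+1, by omega⟩, a) q from dif_pos (by omega)]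
        have : Ky ((⟨s+1, by omega⟩ : Fin (κ₁+1)), a) q = 0 := by
          subst hse; exact e1
        rw [this]; simp
    rw [hky1]
    have hkys : ky s = Ky (⟨s, by omega⟩, a) q := dif_pos (by omega)
    have hx : Kx (⟨s+1, ht⟩, a) q = -(ky s) := by
      have := e2 s hs
      rw [hkys]; linarith
    have hy : Ky (⟨s+1, ht⟩, a) q = ky (s+1) := by
      have : ky (s+1) = Ky (⟨s+1, by omega⟩, a) q := dif_pos (by omega)
      rw [this]
    rw [hx, hy]
    push_cast [map_neg]
    ring
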